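/- (Theorem 1.) Let η > 0, let W ∈ ℝ^{f×n} have full column rank with left inverse W⁺ (W⁺ W = I_n), and suppose there exist K ∈ ℝ^{m×n} and a matrix-valued function M : P → ℝ^{f×f} such that for every (A, B, Δx, Δu) ∈ P̄: (i) for every i ∈ 1..f, 1 − η − Σ_{j=1}^f M_{ij}(A, B) ≥ 0, and (ii) for every i, j ∈ 1..f, M_{ij}(A, B) − [W(A+BK)W⁺]_{ij} ≥ 0 and M_{ij}(A, B) + [W(A+BK)W⁺]_{ij} ≥ 0. Then for every plant (A, B) in the consistency set P, the closed-loop matrix A + BK is W-superstable, i.e. ‖W(A+BK)W⁺‖_∞ ≤ 1 − η < 1. -/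
import Mathlib


/-- The operator norm of a square real matrix induced by the vector sup-norm:
`‖C‖_∞ = max_i ∑_j |C i j|`. -/
noncomputable def matInfNorm {f : ℕ} (C : Matrix (Fin f) (Fin f) ℝ) : ℝ :=
  ⨆ i, ∑ j, |C i j|

/-- The Euclidean norm `‖v‖₂` of a finite real vector. -/
noncomputable def euclNorm {k : ℕ} (v : Fin k → ℝ) : ℝ :=
  Real.sqrt (∑ i, v i ^ 2)

/-- The eivResidual `h⁰_t(A,B) = x̂_{t+1} − A x̂_t − B û_t`.
(The paper's states `x̂_1, …, x̂_T` are indexed here by `Fin (T+1)`, with the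
inputs `û_1, …, û_{T−1}` indexed by `Fin T`.) -/
def eivResidual {n m T : ℕ} (xhat : Fin (T + 1) → Fin n → ℝ) (uhat : Fin T → Fin m → ℝ)
    (A : Matrix (Fin n) (Fin n) ℝ) (B : Matrix (Fin n) (Fin m) ℝ) (t : Fin T) :
    Fin n → ℝ :=
  xhat t.succ - A.mulVec (xhat t.castSucc) - B.mulVec (uhat t)

/-- The stacking of blocks `v_t ∈ ℝ^k`, `t = 1..T`, into a single vector of `ℝ^{kT}`. -/
def stack2 {T k : ℕ} (v : Fin T → Fin k → ℝ) : Fin T × Fin k → ℝ :=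
  fun p => v p.1 p.2

/-- The joint consistency set `P̄` of tuples `(A, B, Δx, Δu)` satisfying the
error-in-variables dynamics with eivResidual `h⁰` and the quadratic noise bounds
`‖F_ℓ Δx + G_ℓ Δu‖₂ ≤ 1` for `ℓ = 1..L`. -/
def consistentBar {n m T L : ℕ} (nl : Fin L → ℕ)
    (xhat : Fin (T + 1) → Fin n → ℝ) (uhat : Fin T → Fin m → ℝ)
    (F : (ℓ : Fin L) → Matrix (Fin (nl ℓ)) (Fin (T + 1) × Fin n) ℝ)
    (G : (ℓ : Fin L) → Matrix (Fin (nl ℓ)) (Fin T × Fin m) ℝ) :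
    Set (Matrix (Fin n) (Fin n) ℝ × Matrix (Fin n) (Fin m) ℝ ×
      (Fin (T + 1) → Fin n → ℝ) × (Fin T → Fin m → ℝ)) :=
  {p | (∀ t : Fin T, p.2.2.1 t.succ =
          p.1.mulVec (p.2.2.1 t.castSucc) + p.2.1.mulVec (p.2.2.2 t) +
            eivResidual xhat uhat p.1 p.2.1 t) ∧
       (∀ ℓ : Fin L,
          euclNorm ((F ℓ).mulVec (stack2 p.2.2.1) + (G ℓ).mulVec (stack2 p.2.2.2)) ≤ 1)}

/-- The consistency set `P`: the projection of `P̄` onto the plant coordinates `(A, B)`. -/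
def consistent {n m T L : ℕ} (nl : Fin L → ℕ)
    (xhat : Fin (T + 1) → Fin n → ℝ) (uhat : Fin T → Fin m → ℝ)
    (F : (ℓ : Fin L) → Matrix (Fin (nl ℓ)) (Fin (T + 1) × Fin n) ℝ)
    (G : (ℓ : Fin L) → Matrix (Fin (nl ℓ)) (Fin T × Fin m) ℝ) :
    Set (Matrix (Fin n) (Fin n) ℝ × Matrix (Fin n) (Fin m) ℝ) :=
  {q | ∃ dx du, (q.1, q.2, dx, du) ∈ consistentBar nl xhat uhat F G}

theorem stmt4 (n m f T L : ℕ) (hn : 0 < n) (hf : 0 < f) (nl : Fin L → ℕ)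
    (xhat : Fin (T + 1) → Fin n → ℝ) (uhat : Fin T → Fin m → ℝ)
    (F : (ℓ : Fin L) → Matrix (Fin (nl ℓ)) (Fin (T + 1) × Fin n) ℝ)
    (G : (ℓ : Fin L) → Matrix (Fin (nl ℓ)) (Fin T × Fin m) ℝ)
    (η : ℝ) (hη : 0 < η)
    (W : Matrix (Fin f) (Fin n) ℝ) (Wp : Matrix (Fin n) (Fin f) ℝ)
    (hW : Wp * W = 1)
    (K : Matrix (Fin m) (Fin n) ℝ)
    (M : Matrix (Fin n) (Fin n) ℝ × Matrix (Fin n) (Fin m) ℝ → Matrix (Fin f) (Fin f) ℝ)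
    (hrow : ∀ p ∈ consistentBar nl xhat uhat F G, ∀ i : Fin f,
        0 ≤ 1 - η - ∑ j, M (p.1, p.2.1) i j)
    (helem : ∀ p ∈ consistentBar nl xhat uhat F G, ∀ i j : Fin f,
        0 ≤ M (p.1, p.2.1) i j - (W * (p.1 + p.2.1 * K) * Wp) i j ∧
        0 ≤ M (p.1, p.2.1) i j + (W * (p.1 + p.2.1 * K) * Wp) i j) :
    ∀ q ∈ consistent nl xhat uhat F G,
      matInfNorm (W * (q.1 + q.2 * K) * Wp) ≤ 1 - η ∧
      matInfNorm (W * (q.1 + q.2 * K) * Wp) < 1 := by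
  rintro ⟨A, B⟩ ⟨dx, du, hp⟩
  have key : matInfNorm (W * (A + B * K) * Wp) ≤ 1 - η := by
    haveI : Nonempty (Fin f) := ⟨⟨0, hf⟩⟩
    apply ciSup_le
    intro i
    have hr := hrow _ hp i
    calc ∑ j, |(W * (A + B * K) * Wp) i j| ≤ ∑ j, M (A, B) i j := by
          apply Finset.sum_le_sum
          intro j _
          have h := helem _ hp i j
          rw [abs_le]
          constructor <;> linarith [h.1, h.2]
      _ ≤ 1 - η := by linarith
  exact ⟨key, lt_of_le_of_lt key (by linarith)⟩
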